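/- Let H and A be linearly ordered abelian groups, (K,v) a field with an additive valuation v with value group A, σ : A → Kˣ a cross-section for v, and β : H × H → A a normalized symmetric 2-cocycle. Define val on nonzero elements of the twisted Hahn series field K(t^H,β) by val(f) = (v(f.coeff h₀), h₀), where h₀ = min supp(f). Then: (i) for all nonzero a, b one has a ⋆ b ≠ 0 and val(a ⋆ b) = val(a) ⊕ val(b), where ⊕ is the twisted addition (z,h) ⊕ (z',h') = (z + z' − β(h,h'), h+h') on A × H; and (ii) for all nonzero a, b with a + b ≠ 0, val(a + b) ≥ min(val(a), val(b)) in the order (z,h) ≤ (z',h') iff h < h' or (h = h' and z ≤ z'). Hence val is a valuation on K(t^H,β) with value group G_β. -/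

import Mathlib

/-- Twisted multiplication on Hahn series. -/
noncomputable def tmul {K H A : Type*} [Field K]
    [AddCommGroup H] [LinearOrder H] [IsOrderedAddMonoid H] [AddCommGroup A]
    (σ : A → Kˣ) (β : H → H → A) (x y : HahnSeries H K) : HahnSeries H K where
  coeff l := ∑ ij ∈ Finset.addAntidiagonal x.isPWO_support y.isPWO_support l,
      x.coeff ij.1 * y.coeff ij.2 * (σ (-β ij.1 ij.2) : K)
  isPWO_support' := by
    refine Set.IsPWO.mono (x.isPWO_support.add y.isPWO_support) ?_
    intro l hl
    obtain ⟨ij, hij, -⟩ :=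
      Finset.exists_ne_zero_of_sum_ne_zero (Function.mem_support.mp hl)
    simp only [Finset.addAntidiagonal, Finset.mem_antidiagonal] at hij
    exact Set.mem_add.mpr ⟨ij.1, hij.1, ij.2, hij.2.1, hij.2.2⟩

/-- The minimum of the support of a nonzero Hahn series. -/
noncomputable def minSupp {K H : Type*} [Field K] [AddCommGroup H] [LinearOrder H] [IsOrderedAddMonoid H]
    (f : HahnSeries H K) (hf : f ≠ 0) : H :=
  f.isWF_support.min (HahnSeries.support_nonempty_iff.mpr hf)

/-- The valuation `val f = (v (f.coeff h₀), h₀)`, `h₀ = min supp f`, of a nonzero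
Hahn series. -/
noncomputable def tval {K H A : Type*} [Field K] [AddCommGroup H] [LinearOrder H] [IsOrderedAddMonoid H]
    [AddCommGroup A] [LinearOrder A] [IsOrderedAddMonoid A]
    (v : K → WithTop A) (f : HahnSeries H K) (hf : f ≠ 0) : WithTop A × H :=
  (v (f.coeff (minSupp f hf)), minSupp f hf)

/-- The order `(z,h) ≤ (z',h') ↔ h < h' ∨ (h = h' ∧ z ≤ z')` on values. -/
def pLe {A H : Type*} [AddCommGroup A] [LinearOrder A] [IsOrderedAddMonoid A] [AddCommGroup H] [LinearOrder H] [IsOrderedAddMonoid H]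
    (p q : WithTop A × H) : Prop :=
  p.2 < q.2 ∨ (p.2 = q.2 ∧ p.1 ≤ q.1)


section Aux

variable {K H A : Type*} [Field K] [AddCommGroup H] [LinearOrder H] [IsOrderedAddMonoid H]
    [AddCommGroup A] [LinearOrder A] [IsOrderedAddMonoid A]

lemma minSupp_coeff_ne_zero (f : HahnSeries H K) (hf : f ≠ 0) :
    f.coeff (minSupp f hf) ≠ 0 :=
  f.isWF_support.min_mem _

lemma minSupp_le {f : HahnSeries H K} (hf : f ≠ 0) {l : H} (hl : f.coeff l ≠ 0) :
    minSupp f hf ≤ l :=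
  f.isWF_support.min_le _ hl

lemma tmul_coeff_min (σ : A → Kˣ) (β : H → H → A) (a b : HahnSeries H K)
    (ha : a ≠ 0) (hb : b ≠ 0) :
    (tmul σ β a b).coeff (minSupp a ha + minSupp b hb)
      = a.coeff (minSupp a ha) * b.coeff (minSupp b hb)
        * (σ (-β (minSupp a ha) (minSupp b hb)) : K) := by
  unfold minSupp
  show (∑ ij ∈ Finset.addAntidiagonal a.isWF_support.isPWO b.isWF_support.isPWO _, _) = _
  simp only [Finset.addAntidiagonal]
  rw [Finset.antidiagonal_min_add_min, Finset.sum_singleton]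

lemma tval_add_aux (v : K → WithTop A)
    (hv_add : ∀ x y : K, min (v x) (v y) ≤ v (x + y))
    (a b c : HahnSeries H K) (ha : a ≠ 0) (hb : b ≠ 0) (hc : c ≠ 0)
    (hcoeff : ∀ l, c.coeff l = a.coeff l + b.coeff l)
    (hle : minSupp a ha ≤ minSupp b hb) :
    pLe (tval v a ha) (tval v c hc) ∨ pLe (tval v b hb) (tval v c hc) := by
  set ma := minSupp a ha with hma
  set mb := minSupp b hb with hmb
  set mc := minSupp c hc with hmc
  have hcmem : c.coeff mc ≠ 0 := minSupp_coeff_ne_zero c hc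
  have hmac : ma ≤ mc := by
    rw [hcoeff] at hcmem
    rcases (by
      by_contra hcon
      push_neg at hcon
      rw [hcon.1, hcon.2, add_zero] at hcmem
      exact hcmem rfl : a.coeff mc ≠ 0 ∨ b.coeff mc ≠ 0) with h | h
    · exact minSupp_le ha h
    · exact le_trans hle (minSupp_le hb h)
  rcases lt_or_eq_of_le hmac with hlt | heq
  · exact Or.inl (Or.inl hlt)
  · rcases lt_or_ge mc mb with hbm | hbm
    · -- b.coeff mc = 0, so c.coeff mc = a.coeff mc
      have hb0 : b.coeff mc = 0 := by
        by_contra h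
        exact absurd (minSupp_le hb h) (not_le.mpr hbm)
      have : c.coeff mc = a.coeff ma := by rw [hcoeff, hb0, add_zero, heq]
      refine Or.inl (Or.inr ⟨heq, le_of_eq ?_⟩)
      show v (a.coeff ma) = v (c.coeff mc)
      rw [this]
    · have hmbc : mb = mc := le_antisymm hbm (heq ▸ hle)
      have hkey : min (v (a.coeff mc)) (v (b.coeff mc)) ≤ v (c.coeff mc) := by
        rw [hcoeff]; exact hv_add _ _
      rcases le_total (v (a.coeff mc)) (v (b.coeff mc)) with h | h
      · refine Or.inl (Or.inr ⟨heq, ?_⟩)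
        show v (a.coeff ma) ≤ v (c.coeff mc)
        rw [heq]
        exact le_trans (le_of_eq (min_eq_left h).symm) hkey
      · refine Or.inr (Or.inr ⟨hmbc, ?_⟩)
        show v (b.coeff mb) ≤ v (c.coeff mc)
        rw [hmbc]
        exact le_trans (le_of_eq (min_eq_right h).symm) hkey

end Aux

/-- For a field `K` with additive valuation `v` with value group `A`
and cross-section `σ`, and a normalized symmetric 2-cocycle `β : H × H → A`,
the map `val f = (v (f.coeff h₀), h₀)` (`h₀ = min supp f`) on nonzero twisted
Hahn series satisfies: (i) products of nonzero elements are nonzero and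
`val (a ⋆ b) = val a ⊕ val b` for the twisted addition
`(z,h) ⊕ (z',h') = (z + z' - β h h', h + h')` (stated additively:
the minimal exponents add, and the `v`-components satisfy
`v(..) + β(h_a, h_b) = v(..) + v(..)`); (ii) `val (a+b) ≥ min (val a) (val b)`
in the order `(z,h) ≤ (z',h') ↔ h < h' ∨ (h = h' ∧ z ≤ z')`.
Hence `val` is a valuation on `K(t^H,β)` with value group `G_β`. -/
theorem twisted_hahn_series_valuation
    {K H A : Type*} [Field K]
    [AddCommGroup H] [LinearOrder H] [IsOrderedAddMonoid H] [AddCommGroup A] [LinearOrder A] [IsOrderedAddMonoid A]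
    (v : K → WithTop A)
    (hv_top : ∀ x : K, v x = ⊤ ↔ x = 0)
    (hv_mul : ∀ x y : K, v (x * y) = v x + v y)
    (hv_add : ∀ x y : K, min (v x) (v y) ≤ v (x + y))
    (hv_surj : ∀ a : A, ∃ x : K, v x = (a : WithTop A))
    (σ : A → Kˣ) (hσ : ∀ a a' : A, σ (a + a') = σ a * σ a')
    (hσ_cross : ∀ a : A, v ((σ a : K)) = (a : WithTop A))
    (β : H → H → A)
    (hβsymm : ∀ h h' : H, β h h' = β h' h)
    (hβnorm : ∀ h : H, β h 0 = 0 ∧ β 0 h = 0)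
    (hβcoc : ∀ h h' h'' : H, β h h' + β (h + h') h'' = β h' h'' + β h (h' + h'')) :
    (∀ (a b : HahnSeries H K) (ha : a ≠ 0) (hb : b ≠ 0),
      ∃ hab : tmul σ β a b ≠ 0,
        minSupp (tmul σ β a b) hab = minSupp a ha + minSupp b hb ∧
        v ((tmul σ β a b).coeff (minSupp (tmul σ β a b) hab))
            + (β (minSupp a ha) (minSupp b hb) : WithTop A)
          = v (a.coeff (minSupp a ha)) + v (b.coeff (minSupp b hb))) ∧
    (∀ (a b : HahnSeries H K) (ha : a ≠ 0) (hb : b ≠ 0) (hab : a + b ≠ 0),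
      pLe (tval v a ha) (tval v (a + b) hab) ∨
      pLe (tval v b hb) (tval v (a + b) hab)) := by
  constructor
  · intro a b ha hb
    have hamem := minSupp_coeff_ne_zero a ha
    have hbmem := minSupp_coeff_ne_zero b hb
    have key := tmul_coeff_min σ β a b ha hb
    have hcne : (tmul σ β a b).coeff (minSupp a ha + minSupp b hb) ≠ 0 := by
      rw [key]
      exact mul_ne_zero (mul_ne_zero hamem hbmem) (Units.ne_zero _)
    have hab : tmul σ β a b ≠ 0 := by
      intro h
      rw [h] at hcne
      exact hcne rfl
    refine ⟨hab, ?_, ?_⟩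
    · have hlb : ∀ l : H, (tmul σ β a b).coeff l ≠ 0 →
          minSupp a ha + minSupp b hb ≤ l := by
        intro l hl
        obtain ⟨ij, hij, -⟩ := Finset.exists_ne_zero_of_sum_ne_zero hl
        simp only [Finset.addAntidiagonal, Finset.mem_antidiagonal] at hij
        calc minSupp a ha + minSupp b hb ≤ ij.1 + ij.2 :=
              add_le_add (minSupp_le ha hij.1) (minSupp_le hb hij.2.1)
          _ = l := hij.2.2
      exact le_antisymm (minSupp_le hab hcne)
        (hlb _ (minSupp_coeff_ne_zero _ hab))
    · have hmin : minSupp (tmul σ β a b) hab = minSupp a ha + minSupp b hb := by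
        have hlb : ∀ l : H, (tmul σ β a b).coeff l ≠ 0 →
            minSupp a ha + minSupp b hb ≤ l := by
          intro l hl
          obtain ⟨ij, hij, -⟩ := Finset.exists_ne_zero_of_sum_ne_zero hl
          simp only [Finset.addAntidiagonal, Finset.mem_antidiagonal] at hij
          calc minSupp a ha + minSupp b hb ≤ ij.1 + ij.2 :=
                add_le_add (minSupp_le ha hij.1) (minSupp_le hb hij.2.1)
            _ = l := hij.2.2
        exact le_antisymm (minSupp_le hab hcne)
          (hlb _ (minSupp_coeff_ne_zero _ hab))
      rw [hmin, key, hv_mul, hv_mul, hσ_cross, add_assoc, ← WithTop.coe_add,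
        neg_add_cancel, WithTop.coe_zero, add_zero]
  · intro a b ha hb hab
    rcases le_total (minSupp a ha) (minSupp b hb) with h | h
    · exact tval_add_aux v hv_add a b (a + b) ha hb hab
        (fun l => HahnSeries.coeff_add) h
    · exact (tval_add_aux v hv_add b a (a + b) hb ha hab
        (fun l => by rw [HahnSeries.coeff_add]; ring) h).symm
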